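/- Suppose β_n = 1 − (2 + (−1)^n)/ℓ_n (for n large enough that this lies in [0,1]). Then for every real c: along even n, lim d_n(t_n + c·w_n) = e^{−c}·(1 + e^{3}), while along odd n, lim d_n(t_n + c·w_n) = e^{−c}·(1 + e^{1}). In particular, for no real c does the sequence d_n(t_n + c·w_n) converge: there is no profile cutoff at (t_n, w_n). -/

import Mathlib

open Filter Real
open scoped Topology

/-- `ℓ_n = log(n / log n)`. -/
noncomputable def ell (n : ℕ) : ℝ := Real.log (n / Real.log n)

/-- Distance to equilibrium of the Ornstein–Uhlenbeck example of Barrera–Ycart: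
`d_n(t) = Σ_{i=1}^{9^n} a_{i,n} e^{-ρ_{i,n} t}` with `a_{1,n} = e^n`,
`ρ_{1,n} = n/(1 + (β_n/n) ℓ_n)`, and for `2 ≤ i ≤ 9^n`:
`a_{i,n} = e^{-n}`, `ρ_{i,n} = log(e^n + (i-1) e^{-n})`. -/
noncomputable def dCut (β : ℕ → ℝ) (n : ℕ) (t : ℝ) : ℝ :=
  Real.exp n * Real.exp (-((n : ℝ) / (1 + β n / n * ell n)) * t) +
    ∑ i ∈ Finset.Icc (2 : ℕ) (9 ^ n),
      Real.exp (-(n : ℝ)) *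
        Real.exp (-Real.log (Real.exp n + ((i : ℝ) - 1) * Real.exp (-(n : ℝ))) * t)

/-- Cutoff location `t_n = 1 + β_n ℓ_n / n`. -/
noncomputable def cutT (β : ℕ → ℝ) (n : ℕ) : ℝ := 1 + β n * ell n / n

/-- Window width `w_n = t_n / n`. -/
noncomputable def cutW (β : ℕ → ℝ) (n : ℕ) : ℝ := cutT β n / n

/-- Correction term `r_n = ℓ_n w_n`. -/
noncomputable def cutR (β : ℕ → ℝ) (n : ℕ) : ℝ := ell n * cutW β n

noncomputable def BEx (n : ℕ) : ℝ :=
  Real.exp (-(n : ℝ)) * ((9 ^ n - 1 : ℕ) : ℝ) + Real.exp n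

lemma integral_eval (n : ℕ) (T : ℝ) (hT : 1 < T) :
    (∫ y in (0:ℝ)..((9 ^ n - 1 : ℕ) : ℝ),
        Real.exp (-(n:ℝ)) * (Real.exp (-(n:ℝ)) * y + Real.exp n) ^ (-T))
      = (Real.exp ((n:ℝ) * (1 - T)) - BEx n ^ (1 - T)) / (T - 1) := by
  have hne : Real.exp (-(n:ℝ)) ≠ 0 := Real.exp_ne_zero _
  rw [intervalIntegral.integral_const_mul]
  rw [intervalIntegral.integral_comp_mul_add (fun u : ℝ => u ^ (-T)) hne (Real.exp (n:ℝ))]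
  have hlo : (0:ℝ) < Real.exp (-(n:ℝ)) * 0 + Real.exp (n:ℝ) := by positivity
  have hhi : (0:ℝ) < Real.exp (-(n:ℝ)) * ((9 ^ n - 1 : ℕ) : ℝ) + Real.exp (n:ℝ) := by
    positivity
  have hmem : (0:ℝ) ∉ Set.uIcc (Real.exp (-(n:ℝ)) * 0 + Real.exp (n:ℝ))
      (Real.exp (-(n:ℝ)) * ((9 ^ n - 1 : ℕ) : ℝ) + Real.exp (n:ℝ)) :=
    Set.notMem_uIcc_of_lt hlo hhi
  have hne1 : -T ≠ -1 := by intro h; have := neg_injective h; linarith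
  rw [integral_rpow (Or.inr ⟨hne1, hmem⟩)]
  rw [smul_eq_mul, ← mul_assoc, mul_inv_cancel₀ hne, one_mul]
  have h0 : Real.exp (-(n:ℝ)) * 0 + Real.exp (n:ℝ) = Real.exp (n:ℝ) := by ring
  rw [h0]
  have h1 : -T + 1 = 1 - T := by ring
  rw [h1, ← Real.exp_mul]
  show (BEx n ^ (1 - T) - Real.exp ((n:ℝ) * (1 - T))) / (1 - T) = _
  rw [div_eq_div_iff (by intro h; apply absurd hT; rw [show T = 1 by linarith]; simp)
    (by intro h; apply absurd hT; rw [show T = 1 by linarith]; simp)]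
  ring

lemma bracket (n : ℕ) (hn : 1 ≤ n) (T : ℝ) (hT : 1 < T) :
    ((∫ y in (0:ℝ)..((9 ^ n - 1 : ℕ) : ℝ),
        Real.exp (-(n:ℝ)) * (Real.exp (-(n:ℝ)) * y + Real.exp n) ^ (-T))
      - Real.exp (-(n:ℝ)) * Real.exp (n:ℝ) ^ (-T)
      ≤ ∑ i ∈ Finset.Icc (2:ℕ) (9 ^ n),
          Real.exp (-(n:ℝ)) * (Real.exp (-(n:ℝ)) * ((i:ℝ) - 1) + Real.exp n) ^ (-T))
    ∧ (∑ i ∈ Finset.Icc (2:ℕ) (9 ^ n),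
          Real.exp (-(n:ℝ)) * (Real.exp (-(n:ℝ)) * ((i:ℝ) - 1) + Real.exp n) ^ (-T)
      ≤ ∫ y in (0:ℝ)..((9 ^ n - 1 : ℕ) : ℝ),
          Real.exp (-(n:ℝ)) * (Real.exp (-(n:ℝ)) * y + Real.exp n) ^ (-T)) := by
  set a : ℕ := 9 ^ n - 1 with ha_def
  set f : ℝ → ℝ := fun y => Real.exp (-(n:ℝ)) * (Real.exp (-(n:ℝ)) * y + Real.exp n) ^ (-T)
    with hf_def
  have h9 : 9 ≤ 9 ^ n := Nat.le_self_pow (by omega) 9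
  have ha1 : 1 ≤ a := by omega
  have hanti : AntitoneOn f (Set.Icc (0:ℝ) (0 + (a:ℕ))) := by
    intro y1 h1 y2 h2 h12
    have e1 : (0:ℝ) < Real.exp (-(n:ℝ)) * y1 + Real.exp (n:ℝ) :=
      add_pos_of_nonneg_of_pos (mul_nonneg (Real.exp_pos _).le h1.1) (Real.exp_pos _)
    refine mul_le_mul_of_nonneg_left ?_ (Real.exp_pos _).le
    refine Real.rpow_le_rpow_of_nonpos e1 ?_ (by linarith)
    have := mul_le_mul_of_nonneg_left h12 (Real.exp_pos (-(n:ℝ))).le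
    linarith
  have hfnonneg : ∀ y : ℝ, 0 ≤ y → 0 ≤ f y := by
    intro y hy
    have : (0:ℝ) ≤ Real.exp (-(n:ℝ)) * y + Real.exp (n:ℝ) := by positivity
    exact mul_nonneg (Real.exp_pos _).le (Real.rpow_nonneg this _)
  have hsum : (∑ i ∈ Finset.Icc (2:ℕ) (9 ^ n),
          Real.exp (-(n:ℝ)) * (Real.exp (-(n:ℝ)) * ((i:ℝ) - 1) + Real.exp n) ^ (-T))
      = ∑ j ∈ Finset.range a, f ((0:ℝ) + ((j + 1 : ℕ) : ℝ)) := by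
    rw [← Finset.Ico_add_one_right_eq_Icc, Finset.sum_Ico_eq_sum_range]
    have h2 : 9 ^ n + 1 - 2 = a := by omega
    rw [h2]
    refine Finset.sum_congr rfl fun j _ => ?_
    simp only [hf_def]
    congr 2
    push_cast
    ring
  have hint : (∫ y in (0:ℝ)..((9 ^ n - 1 : ℕ) : ℝ), f y)
      = ∫ y in (0:ℝ)..((0:ℝ) + (a:ℕ)), f y := by
    rw [zero_add]
  constructor
  · -- lower bound
    have hle : (∫ y in (0:ℝ)..((0:ℝ) + (a:ℕ)), f y) ≤ ∑ i ∈ Finset.range a, f (0 + (i:ℕ)) :=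
      hanti.integral_le_sum
    have hsplit : (∑ i ∈ Finset.range a, f ((0:ℝ) + (i:ℕ)))
        = (∑ j ∈ Finset.range (a - 1), f ((0:ℝ) + ((j + 1 : ℕ) : ℝ))) + f ((0:ℝ) + ((0:ℕ):ℝ)) := by
      have : a = (a - 1) + 1 := by omega
      conv_lhs => rw [this, Finset.sum_range_succ']
    have hsub : (∑ j ∈ Finset.range (a - 1), f ((0:ℝ) + ((j + 1 : ℕ) : ℝ)))
        ≤ ∑ j ∈ Finset.range a, f ((0:ℝ) + ((j + 1 : ℕ) : ℝ)) := by
      refine Finset.sum_le_sum_of_subset_of_nonneg (Finset.range_subset_range.2 (by omega)) ?_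
      intro j _ _
      exact hfnonneg _ (by positivity)
    have hf00 : f ((0:ℝ) + ((0:ℕ):ℝ)) = Real.exp (-(n:ℝ)) * Real.exp (n:ℝ) ^ (-T) := by
      simp [hf_def]
    rw [hsum, hint]
    calc (∫ y in (0:ℝ)..((0:ℝ) + (a:ℕ)), f y) - Real.exp (-(n:ℝ)) * Real.exp (n:ℝ) ^ (-T)
        ≤ (∑ i ∈ Finset.range a, f ((0:ℝ) + (i:ℕ))) - f ((0:ℝ) + ((0:ℕ):ℝ)) := by
          rw [hf00] at *; linarith
      _ = ∑ j ∈ Finset.range (a - 1), f ((0:ℝ) + ((j + 1 : ℕ) : ℝ)) := by rw [hsplit]; ring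
      _ ≤ _ := hsub
  · -- upper bound
    rw [hsum, hint]
    exact hanti.sum_le_integral

lemma aux_log_div : Tendsto (fun x : ℝ => Real.log x / x) atTop (𝓝 0) :=
  Real.isLittleO_log_id_atTop.tendsto_div_nhds_zero

lemma aux_x_div_log : Tendsto (fun x : ℝ => x / Real.log x) atTop atTop := by
  have h : Tendsto (fun x : ℝ => Real.log x / x) atTop (𝓝[>] 0) := by
    rw [tendsto_nhdsWithin_iff]
    refine ⟨aux_log_div, ?_⟩
    filter_upwards [eventually_gt_atTop (1 : ℝ)] with x hx
    exact div_pos (Real.log_pos hx) (lt_trans one_pos hx)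
  exact h.inv_tendsto_nhdsGT_zero.congr fun x => by simp [Pi.inv_apply, inv_div]

lemma aux_cast : Tendsto (fun n : ℕ => (n : ℝ)) atTop atTop :=
  tendsto_natCast_atTop_atTop

lemma aux_logn : Tendsto (fun n : ℕ => Real.log n) atTop atTop :=
  Real.tendsto_log_atTop.comp aux_cast

lemma tendsto_ell : Tendsto ell atTop atTop :=
  Real.tendsto_log_atTop.comp (aux_x_div_log.comp aux_cast)

lemma aux_log_ge_one {n : ℕ} (hn : 3 ≤ n) : 1 ≤ Real.log n := by
  rw [Real.le_log_iff_exp_le (by positivity)]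
  calc Real.exp 1 ≤ 2.7182818286 := le_of_lt Real.exp_one_lt_d9
    _ ≤ ((3:ℕ) : ℝ) := by norm_num
    _ ≤ (n : ℝ) := by exact_mod_cast hn

lemma ell_eq : ∀ᶠ n : ℕ in atTop, ell n = Real.log n - Real.log (Real.log n) := by
  filter_upwards [eventually_ge_atTop 2] with n hn
  have h1 : (0 : ℝ) < n := by positivity
  have h2 : (0 : ℝ) < Real.log n := Real.log_pos (by exact_mod_cast hn)
  rw [ell, Real.log_div (ne_of_gt h1) (ne_of_gt h2)]

lemma aux_loglog_div_log :
    Tendsto (fun n : ℕ => Real.log (Real.log n) / Real.log n) atTop (𝓝 0) :=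
  aux_log_div.comp aux_logn

lemma aux_logn_div_n : Tendsto (fun n : ℕ => Real.log n / n) atTop (𝓝 0) :=
  aux_log_div.comp aux_cast

lemma tendsto_ell_div_n : Tendsto (fun n : ℕ => ell n / n) atTop (𝓝 0) := by
  apply tendsto_of_tendsto_of_tendsto_of_le_of_le' tendsto_const_nhds aux_logn_div_n
  · filter_upwards [tendsto_ell.eventually_ge_atTop 0, eventually_ge_atTop 1] with n h1 h2
    positivity
  · filter_upwards [eventually_ge_atTop 3] with n hn
    have h1 : (1 : ℝ) ≤ Real.log n := aux_log_ge_one hn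
    have h2 : ell n ≤ Real.log n := by
      apply Real.log_le_log (by positivity)
      calc (n : ℝ) / Real.log n ≤ (n:ℝ) / 1 := by
            apply div_le_div_of_nonneg_left (by positivity) one_pos h1
        _ = n := by ring
    have h3 : (0:ℝ) < n := by positivity
    gcongr

noncomputable def tEx (β : ℕ → ℝ) (c : ℝ) (n : ℕ) : ℝ := cutT β n * (1 + c / n)

noncomputable def qEx (β : ℕ → ℝ) (c ε : ℝ) (n : ℕ) : ℝ := ell n - (2 + ε) + c * cutT β n

lemma main_lim (β : ℕ → ℝ) (c ε : ℝ) {l : Filter ℕ}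
    (hl : Tendsto (fun n : ℕ => n) l atTop)
    (hβ : ∀ᶠ n : ℕ in l, β n * ell n = ell n - (2 + ε)) :
    Tendsto (fun n => dCut β n (cutT β n + c * cutW β n)) l
      (𝓝 (Real.exp (-c) + Real.exp (2 + ε - c))) := by
  have hl' : Tendsto (fun n : ℕ => (n:ℝ)) l atTop := aux_cast.comp hl
  have hlog : Tendsto (fun n : ℕ => Real.log n) l atTop := aux_logn.comp hl
  have hell : Tendsto (fun n => ell n) l atTop := tendsto_ell.comp hl
  have helln : Tendsto (fun n => ell n / n) l (𝓝 0) := tendsto_ell_div_n.comp hl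
  have hinvn : Tendsto (fun n : ℕ => 1/(n:ℝ)) l (𝓝 0) :=
    tendsto_one_div_atTop_nhds_zero_nat.comp hl
  have hloglog : Tendsto (fun n : ℕ => Real.log (Real.log n) / Real.log n) l (𝓝 0) :=
    aux_loglog_div_log.comp hl
  have helleq : ∀ᶠ n : ℕ in l, ell n = Real.log n - Real.log (Real.log n) := hl.eventually ell_eq
  have hinvlog : Tendsto (fun n : ℕ => 1/Real.log n) l (𝓝 0) := by
    simpa [one_div, Pi.inv_def] using hlog.inv_tendsto_atTop
  -- cutT description and limit
  have hT : ∀ᶠ n : ℕ in l, cutT β n = 1 + (ell n - (2 + ε)) / n := by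
    filter_upwards [hβ] with n h
    rw [cutT, h]
  have hTlim : Tendsto (fun n => cutT β n) l (𝓝 1) := by
    have h1 : Tendsto (fun n : ℕ => 1 + (ell n - (2+ε))/(n:ℝ)) l (𝓝 (1 + 0)) := by
      apply tendsto_const_nhds.add
      have h2 : (fun n : ℕ => (ell n - (2+ε))/(n:ℝ))
          = fun n : ℕ => ell n / n - (2+ε) * (1/(n:ℝ)) := by
        funext n; rw [sub_div, mul_one_div]
      rw [h2]
      simpa using helln.sub (tendsto_const_nhds.mul hinvn)
    exact Tendsto.congr' (hT.mono fun n h => h.symm) (by simpa using h1)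
  have ht : Tendsto (fun n => tEx β c n) l (𝓝 1) := by
    have h2 : Tendsto (fun n : ℕ => 1 + c / (n:ℝ)) l (𝓝 1) := by
      have h3 : Tendsto (fun n : ℕ => c / (n:ℝ)) l (𝓝 0) := by
        simpa [mul_one_div, div_eq_mul_inv] using tendsto_const_nhds.mul hinvn
      have h4 : Tendsto (fun n : ℕ => 1 + c / (n:ℝ)) l (𝓝 (1 + 0)) :=
        (tendsto_const_nhds : Tendsto (fun _ : ℕ => (1:ℝ)) l (𝓝 1)).add h3
      simpa using h4
    simpa [tEx] using hTlim.mul h2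
  have hqeq : ∀ᶠ n : ℕ in l, (n:ℝ) * (tEx β c n - 1) = qEx β c ε n := by
    filter_upwards [hT, hl.eventually (eventually_ge_atTop 1)] with n hTn hn1
    have hn0 : (n:ℝ) ≠ 0 := by
      have : (0:ℝ) < n := by exact_mod_cast Nat.lt_of_lt_of_le Nat.zero_lt_one hn1
      exact ne_of_gt this
    simp only [tEx, qEx, hTn]
    field_simp
    ring
  have hq1 : Tendsto (fun n => qEx β c ε n / Real.log n) l (𝓝 1) := by
    have h1 : ∀ᶠ n : ℕ in l, qEx β c ε n / Real.log n
        = (1 - Real.log (Real.log n)/Real.log n)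
          + (c * cutT β n - (2+ε)) * (1/Real.log n) := by
      filter_upwards [helleq, hl.eventually (eventually_ge_atTop 3)] with n he hn3
      have hlg : (0:ℝ) < Real.log n := lt_of_lt_of_le one_pos (aux_log_ge_one hn3)
      simp only [qEx, he]
      field_simp
      ring
    have h2 : Tendsto (fun n : ℕ => (1 - Real.log (Real.log n)/Real.log n)
        + (c * cutT β n - (2+ε)) * (1/Real.log n)) l (𝓝 ((1 - 0) + (c * 1 - (2+ε)) * 0)) :=
      (tendsto_const_nhds.sub hloglog).add
        (((tendsto_const_nhds.mul hTlim).sub tendsto_const_nhds).mul hinvlog)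
    have h3 : ((1:ℝ) - 0) + (c * 1 - (2+ε)) * 0 = 1 := by ring
    rw [h3] at h2
    exact Tendsto.congr' (h1.mono fun n h => h.symm) h2
  have hq_top : Tendsto (fun n => qEx β c ε n) l atTop := by
    have h1 := hlog.atTop_mul_pos one_pos hq1
    refine h1.congr' ?_
    filter_upwards [hl.eventually (eventually_ge_atTop 3)] with n hn3
    have hlg : Real.log n ≠ 0 := ne_of_gt (lt_of_lt_of_le one_pos (aux_log_ge_one hn3))
    field_simp
  have hlogq : Tendsto (fun n : ℕ => Real.log n / qEx β c ε n) l (𝓝 1) := by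
    have h := hq1.inv₀ one_ne_zero
    have h2 : (fun n : ℕ => (qEx β c ε n / Real.log n)⁻¹) = fun n : ℕ => Real.log n / qEx β c ε n := by
      funext n; rw [inv_div]
    rw [← inv_one]
    exact h2 ▸ h
  have hq_pos : ∀ᶠ n : ℕ in l, 1 ≤ qEx β c ε n := hq_top.eventually_ge_atTop 1
  have hs_pos : ∀ᶠ n : ℕ in l, 0 < tEx β c n - 1 := by
    filter_upwards [hqeq, hq_pos, hl.eventually (eventually_ge_atTop 1)] with n h1 h2 h3
    have hn : (0:ℝ) < n := by exact_mod_cast Nat.lt_of_lt_of_le Nat.zero_lt_one h3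
    nlinarith
  -- limit of the main integral term
  have hP : Tendsto (fun n : ℕ => Real.exp ((n:ℝ) * (1 - tEx β c n)) / (tEx β c n - 1)) l
      (𝓝 (Real.exp (2 + ε - c))) := by
    have hPeq : ∀ᶠ n : ℕ in l, Real.exp ((n:ℝ) * (1 - tEx β c n)) / (tEx β c n - 1)
        = (Real.log n / qEx β c ε n) * Real.exp (2 + ε - c * cutT β n) := by
      filter_upwards [hqeq, hq_pos, hs_pos, hl.eventually (eventually_ge_atTop 3)]
        with n h1 h2 h3 hn3
      have hn0 : (0:ℝ) < n := by
        have : (0:ℕ) < n := by omega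
        exact_mod_cast this
      have hlogn : (0:ℝ) < Real.log n := lt_of_lt_of_le one_pos (aux_log_ge_one hn3)
      have hexpell : Real.exp (-(ell n)) = Real.log n / n := by
        rw [Real.exp_neg, ell, Real.exp_log (div_pos hn0 hlogn), inv_div]
      have harg : (n:ℝ) * (1 - tEx β c n) = -(ell n) + (2 + ε - c * cutT β n) := by
        have h4 : (n:ℝ) * (1 - tEx β c n) = -((n:ℝ) * (tEx β c n - 1)) := by ring
        rw [h4, h1, qEx]; ring
      have hts : tEx β c n - 1 = qEx β c ε n / n := by
        rw [eq_div_iff (ne_of_gt hn0), mul_comm]; exact h1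
      rw [harg, Real.exp_add, hexpell, hts]
      have hq0 : qEx β c ε n ≠ 0 := by linarith
      field_simp
    have h2 : Tendsto (fun n : ℕ => Real.exp (2 + ε - c * cutT β n)) l
        (𝓝 (Real.exp (2 + ε - c))) := by
      have h3 : Tendsto (fun n : ℕ => 2 + ε - c * cutT β n) l (𝓝 (2 + ε - c * 1)) :=
        tendsto_const_nhds.sub (tendsto_const_nhds.mul hTlim)
      rw [mul_one] at h3
      exact (Real.continuous_exp.tendsto _).comp h3
    have h4 := hlogq.mul h2
    rw [one_mul] at h4
    exact Tendsto.congr' (hPeq.mono fun n h => h.symm) h4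
  -- limit of the boundary term
  have hQ : Tendsto (fun n : ℕ => BEx n ^ (1 - tEx β c n) / (tEx β c n - 1)) l (𝓝 0) := by
    set α : ℝ := Real.log 9 - 1 with hα_def
    have hα : 1 < α := by
      have hexp2 : Real.exp 2 < 9 := by
        have h1 : Real.exp 2 = Real.exp 1 * Real.exp 1 := by
          rw [← Real.exp_add]; norm_num
        nlinarith [Real.exp_one_lt_d9, Real.exp_pos 1]
      have h2 : (2:ℝ) < Real.log 9 := by
        rw [Real.lt_log_iff_exp_lt (by norm_num : (0:ℝ) < 9)]; exact hexp2
      simp only [hα_def]; linarith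
    set U : ℕ → ℝ := fun n => -α * qEx β c ε n + (tEx β c n - 1) * Real.log 2
      + (Real.log n - Real.log (qEx β c ε n)) with hU_def
    have hU : Tendsto U l atBot := by
      have hV : Tendsto (fun n : ℕ => Real.log n - α * qEx β c ε n) l atBot := by
        have hfac : ∀ᶠ n : ℕ in l, Real.log n - α * qEx β c ε n
            = Real.log n * (1 - α * (qEx β c ε n / Real.log n)) := by
          filter_upwards [hl.eventually (eventually_ge_atTop 3)] with n hn3
          have hlg : Real.log n ≠ 0 := ne_of_gt (lt_of_lt_of_le one_pos (aux_log_ge_one hn3))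
          field_simp
        have h5 : Tendsto (fun n : ℕ => 1 - α * (qEx β c ε n / Real.log n)) l
            (𝓝 (1 - α * 1)) := tendsto_const_nhds.sub (tendsto_const_nhds.mul hq1)
        rw [mul_one] at h5
        exact Tendsto.congr' (hfac.mono fun n h => h.symm)
          (hlog.atTop_mul_neg (by linarith) h5)
      have hW : Tendsto (fun n : ℕ => (tEx β c n - 1) * Real.log 2
          - Real.log (qEx β c ε n)) l atBot := by
        have h6 : Tendsto (fun n : ℕ => (tEx β c n - 1) * Real.log 2) l (𝓝 ((1-1) * Real.log 2)) :=
          (ht.sub tendsto_const_nhds).mul tendsto_const_nhds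
        have h6' : ((1:ℝ)-1) * Real.log 2 = 0 := by ring
        rw [h6'] at h6
        have h7 : Tendsto (fun n : ℕ => -Real.log (qEx β c ε n)) l atBot :=
          tendsto_neg_atTop_atBot.comp (Real.tendsto_log_atTop.comp hq_top)
        have := h6.add_atBot h7
        exact this.congr fun n => by ring
      have := Filter.Tendsto.atBot_add_atBot hV hW
      exact this.congr fun n => by simp only [hU_def]; ring
    have hbound : ∀ᶠ n : ℕ in l,
        BEx n ^ (1 - tEx β c n) / (tEx β c n - 1) ≤ Real.exp (U n) := by
      filter_upwards [hs_pos, hq_pos, hqeq, hl.eventually (eventually_ge_atTop 3)]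
        with n hs hq heq hn3
      have hn0 : (0:ℝ) < n := by
        have : (0:ℕ) < n := by omega
        exact_mod_cast this
      have hq0 : (0:ℝ) < qEx β c ε n := by linarith
      have hBpos : (0:ℝ) < BEx n := by
        rw [BEx]; positivity
      have hcast : ((9 ^ n - 1 : ℕ):ℝ) = (9:ℝ)^n - 1 := by
        have h9 : 1 ≤ 9 ^ n := Nat.one_le_pow _ _ (by norm_num)
        push_cast [h9]
        ring
      have h9n : (9:ℝ) ≤ (9:ℝ)^n := by
        calc (9:ℝ) = 9^1 := by norm_num
          _ ≤ (9:ℝ)^n := by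
            apply pow_le_pow_right₀ (by norm_num)
            omega
      have hkey : Real.exp (α * n - Real.log 2) ≤ BEx n := by
        have e1 : Real.exp (α * n - Real.log 2)
            = Real.exp (-(n:ℝ)) * ((9:ℝ)^n / 2) := by
          have e2 : α * (n:ℝ) - Real.log 2
              = Real.log 9 * (n:ℝ) + (-(n:ℝ)) + (-Real.log 2) := by
            simp only [hα_def]; ring
          rw [e2, Real.exp_add, Real.exp_add, Real.exp_neg (Real.log 2),
            Real.exp_log two_pos, Real.exp_mul, Real.exp_log (by norm_num : (0:ℝ) < 9),
            Real.rpow_natCast]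
          ring
        rw [e1, BEx, hcast]
        have e3 : (9:ℝ)^n / 2 ≤ (9:ℝ)^n - 1 := by linarith
        nlinarith [Real.exp_pos (-(n:ℝ)), Real.exp_pos ((n:ℝ))]
      have hlogB : α * (n:ℝ) - Real.log 2 ≤ Real.log (BEx n) :=
        (Real.le_log_iff_exp_le hBpos).2 hkey
      have hts : tEx β c n - 1 = qEx β c ε n / n := by
        rw [eq_div_iff (ne_of_gt hn0), mul_comm]; exact heq
      have e4 : BEx n ^ (1 - tEx β c n) / (tEx β c n - 1)
          = Real.exp (Real.log (BEx n) * (1 - tEx β c n)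
              + (Real.log n - Real.log (qEx β c ε n))) := by
        rw [Real.rpow_def_of_pos hBpos, Real.exp_add, Real.exp_sub,
          Real.exp_log hn0, Real.exp_log hq0, hts]
        rw [div_div_eq_mul_div]
        ring
      rw [e4]
      apply Real.exp_le_exp.2
      simp only [hU_def]
      have h8 : (α * (n:ℝ) - Real.log 2) * (tEx β c n - 1)
          ≤ Real.log (BEx n) * (tEx β c n - 1) :=
        mul_le_mul_of_nonneg_right hlogB (le_of_lt hs)
      nlinarith [heq]
    have hpos : ∀ᶠ n : ℕ in l, 0 ≤ BEx n ^ (1 - tEx β c n) / (tEx β c n - 1) := by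
      filter_upwards [hs_pos] with n hs
      have hBpos : (0:ℝ) ≤ BEx n := by rw [BEx]; positivity
      exact div_nonneg (Real.rpow_nonneg hBpos _) (le_of_lt hs)
    refine tendsto_of_tendsto_of_tendsto_of_le_of_le' tendsto_const_nhds
      (Real.tendsto_exp_atBot.comp hU) hpos hbound
  -- limit of the initial point term
  have hf0 : Tendsto (fun n : ℕ => Real.exp (-(n:ℝ)) * Real.exp (n:ℝ) ^ (-(tEx β c n))) l
      (𝓝 0) := by
    have hexp_neg : Tendsto (fun n : ℕ => Real.exp (-(n:ℝ))) l (𝓝 0) :=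
      Real.tendsto_exp_atBot.comp (tendsto_neg_atTop_atBot.comp hl')
    refine tendsto_of_tendsto_of_tendsto_of_le_of_le' tendsto_const_nhds hexp_neg ?_ ?_
    · filter_upwards with n
      positivity
    · filter_upwards [hs_pos, hl.eventually (eventually_ge_atTop 1)] with n hs hn1
      have hn0 : (0:ℝ) ≤ n := Nat.cast_nonneg n
      rw [← Real.exp_mul]
      calc Real.exp (-(n:ℝ)) * Real.exp ((n:ℝ) * (-(tEx β c n)))
          ≤ Real.exp (-(n:ℝ)) * 1 := by
            apply mul_le_mul_of_nonneg_left _ (Real.exp_pos _).le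
            rw [← Real.exp_zero]
            apply Real.exp_le_exp.2
            nlinarith
        _ = Real.exp (-(n:ℝ)) := by ring
  -- limit of the full integral
  have hG : Tendsto (fun n : ℕ =>
      (Real.exp ((n:ℝ) * (1 - tEx β c n)) - BEx n ^ (1 - tEx β c n)) / (tEx β c n - 1)) l
      (𝓝 (Real.exp (2 + ε - c))) := by
    have h9 := hP.sub hQ
    rw [sub_zero] at h9
    exact h9.congr fun n => (sub_div _ _ _).symm
  -- the main bracketing
  have key : ∀ᶠ n : ℕ in l,
      (Real.exp (-c)
        + (Real.exp ((n:ℝ) * (1 - tEx β c n)) - BEx n ^ (1 - tEx β c n)) / (tEx β c n - 1)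
        - Real.exp (-(n:ℝ)) * Real.exp (n:ℝ) ^ (-(tEx β c n))
        ≤ dCut β n (cutT β n + c * cutW β n))
      ∧ (dCut β n (cutT β n + c * cutW β n)
        ≤ Real.exp (-c)
          + (Real.exp ((n:ℝ) * (1 - tEx β c n)) - BEx n ^ (1 - tEx β c n)) / (tEx β c n - 1)) := by
    filter_upwards [hT, hs_pos, hell.eventually_ge_atTop (2 + ε),
      hl.eventually (eventually_ge_atTop 3)] with n hTn hs hellge hn3
    have hn0 : (0:ℝ) < n := by
      have : (0:ℕ) < n := by omega
      exact_mod_cast this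
    have hTpos : (0:ℝ) < cutT β n := by
      rw [hTn]
      have : (0:ℝ) ≤ (ell n - (2 + ε)) / n := div_nonneg (by linarith) (le_of_lt hn0)
      linarith
    have ht1 : 1 < tEx β c n := by linarith
    -- rewrite dCut
    have step1 : dCut β n (cutT β n + c * cutW β n)
        = Real.exp (-c) + ∑ i ∈ Finset.Icc (2:ℕ) (9 ^ n),
            Real.exp (-(n:ℝ)) * (Real.exp (-(n:ℝ)) * ((i:ℝ) - 1) + Real.exp n)
              ^ (-(tEx β c n)) := by
      rw [dCut]
      congr 1
      · -- first term
        have h1 : (1:ℝ) + β n / (n:ℝ) * ell n = cutT β n := by rw [cutT]; ring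
        rw [h1, ← Real.exp_add]
        congr 1
        rw [cutW]
        field_simp
        ring
      · -- the sum
        refine Finset.sum_congr rfl fun i hi => ?_
        have hi2 : 2 ≤ i := (Finset.mem_Icc.1 hi).1
        have hi2' : (1:ℝ) ≤ (i:ℝ) - 1 := by
          have : (2:ℝ) ≤ (i:ℝ) := by exact_mod_cast hi2
          linarith
        have hbase : Real.exp (n:ℝ) + ((i:ℝ) - 1) * Real.exp (-(n:ℝ))
            = Real.exp (-(n:ℝ)) * ((i:ℝ) - 1) + Real.exp (n:ℝ) := by ring
        have hx : (0:ℝ) < Real.exp (-(n:ℝ)) * ((i:ℝ) - 1) + Real.exp (n:ℝ) := by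
          nlinarith [Real.exp_pos (-(n:ℝ)), Real.exp_pos ((n:ℝ))]
        rw [hbase, Real.rpow_def_of_pos hx]
        congr 1
        have htarg : cutT β n + c * cutW β n = tEx β c n := by
          rw [cutW, tEx]; ring
        rw [htarg]
        ring
    have hbr := bracket n (by omega) (tEx β c n) ht1
    have hie := integral_eval n (tEx β c n) ht1
    rw [hie] at hbr
    rw [step1]
    constructor
    · linarith [hbr.1]
    · linarith [hbr.2]
  -- final squeeze
  have hup : Tendsto (fun n : ℕ => Real.exp (-c)
      + (Real.exp ((n:ℝ) * (1 - tEx β c n)) - BEx n ^ (1 - tEx β c n)) / (tEx β c n - 1)) l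
      (𝓝 (Real.exp (-c) + Real.exp (2 + ε - c))) := tendsto_const_nhds.add hG
  have hlo : Tendsto (fun n : ℕ => Real.exp (-c)
      + (Real.exp ((n:ℝ) * (1 - tEx β c n)) - BEx n ^ (1 - tEx β c n)) / (tEx β c n - 1)
      - Real.exp (-(n:ℝ)) * Real.exp (n:ℝ) ^ (-(tEx β c n))) l
      (𝓝 (Real.exp (-c) + Real.exp (2 + ε - c))) := by
    have := hup.sub hf0
    rw [sub_zero] at this
    exact this
  exact tendsto_of_tendsto_of_tendsto_of_le_of_le' hlo hup
    (key.mono fun n h => h.1) (key.mono fun n h => h.2)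

/-- Case `β_n = 1 - (2 + (-1)^n)/ℓ_n` of Barrera–Ycart: along even `n`,
`d_n(t_n + c w_n) → e^{-c}(1 + e^3)`, while along odd `n`,
`d_n(t_n + c w_n) → e^{-c}(1 + e)`; hence for no real `c` does
`d_n(t_n + c w_n)` converge: there is no profile cutoff at `(t_n, w_n)`. -/
theorem no_profile_beta
    (β : ℕ → ℝ) (hβ : ∀ n, β n = 1 - (2 + (-1 : ℝ) ^ n) / ell n) :
    (∀ c : ℝ, Tendsto (fun k : ℕ => dCut β (2 * k) (cutT β (2 * k) + c * cutW β (2 * k)))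
        atTop (𝓝 (Real.exp (-c) * (1 + Real.exp 3)))) ∧
    (∀ c : ℝ, Tendsto
        (fun k : ℕ => dCut β (2 * k + 1) (cutT β (2 * k + 1) + c * cutW β (2 * k + 1)))
        atTop (𝓝 (Real.exp (-c) * (1 + Real.exp 1)))) ∧
    (∀ c : ℝ, ¬ ∃ L : ℝ, Tendsto (fun n => dCut β n (cutT β n + c * cutW β n))
        atTop (𝓝 L)) := by
  have hβ' : ∀ᶠ n : ℕ in atTop, β n * ell n = ell n - (2 + (-1:ℝ)^n) := by
    filter_upwards [tendsto_ell.eventually_ge_atTop 1] with n h1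
    have hne : ell n ≠ 0 := by linarith
    rw [hβ n]
    field_simp
  have h2k : Tendsto (fun k : ℕ => 2 * k) atTop atTop :=
    tendsto_atTop_mono (fun k => by simp only [id_eq]; omega) tendsto_id
  have h2k1 : Tendsto (fun k : ℕ => 2 * k + 1) atTop atTop :=
    tendsto_atTop_mono (fun k => by simp only [id_eq]; omega) tendsto_id
  have heven : ∀ c : ℝ,
      Tendsto (fun k : ℕ => dCut β (2 * k) (cutT β (2 * k) + c * cutW β (2 * k)))
        atTop (𝓝 (Real.exp (-c) * (1 + Real.exp 3))) := by
    intro c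
    have hb : ∀ᶠ n : ℕ in Filter.map (fun k : ℕ => 2 * k) atTop,
        β n * ell n = ell n - (2 + 1) := by
      rw [Filter.eventually_map]
      filter_upwards [h2k.eventually hβ'] with k h
      rw [Even.neg_one_pow (even_two_mul k)] at h
      exact h
    have hl : Tendsto (fun n : ℕ => n) (Filter.map (fun k : ℕ => 2 * k) atTop) atTop :=
      Filter.tendsto_map'_iff.2 h2k
    have hm := main_lim β c 1 hl hb
    have hval : Real.exp (-c) * (1 + Real.exp 3) = Real.exp (-c) + Real.exp (2 + 1 - c) := by
      rw [mul_add, mul_one, ← Real.exp_add]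
      ring_nf
    rw [hval]
    exact Filter.tendsto_map'_iff.1 hm
  have hodd : ∀ c : ℝ,
      Tendsto (fun k : ℕ => dCut β (2 * k + 1) (cutT β (2 * k + 1) + c * cutW β (2 * k + 1)))
        atTop (𝓝 (Real.exp (-c) * (1 + Real.exp 1))) := by
    intro c
    have hb : ∀ᶠ n : ℕ in Filter.map (fun k : ℕ => 2 * k + 1) atTop,
        β n * ell n = ell n - (2 + (-1)) := by
      rw [Filter.eventually_map]
      filter_upwards [h2k1.eventually hβ'] with k h
      rw [Odd.neg_one_pow ⟨k, by ring⟩] at h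
      exact h
    have hl : Tendsto (fun n : ℕ => n) (Filter.map (fun k : ℕ => 2 * k + 1) atTop) atTop :=
      Filter.tendsto_map'_iff.2 h2k1
    have hm := main_lim β c (-1) hl hb
    have hval : Real.exp (-c) * (1 + Real.exp 1) = Real.exp (-c) + Real.exp (2 + (-1) - c) := by
      rw [mul_add, mul_one, ← Real.exp_add]
      ring_nf
    rw [hval]
    exact Filter.tendsto_map'_iff.1 hm
  refine ⟨heven, hodd, ?_⟩
  rintro c ⟨L, hL⟩
  have hLe : L = Real.exp (-c) * (1 + Real.exp 3) :=
    tendsto_nhds_unique (hL.comp h2k) (heven c)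
  have hLo : L = Real.exp (-c) * (1 + Real.exp 1) :=
    tendsto_nhds_unique (hL.comp h2k1) (hodd c)
  have h31 : Real.exp 1 < Real.exp 3 := Real.exp_lt_exp.2 (by norm_num)
  have hpos := Real.exp_pos (-c)
  nlinarith [hLe.symm.trans hLo]
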